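/- Let p₁, p₂ : [a,b] → ℝ be twice differentiable with p₁ > 0, p₂ > 0, satisfying p₁(θ)p₂(θ) = p₁'(θ)p₂'(θ) on [a,b]. If p₁' < 0, p₂' < 0, and p₂'' < 0 on [a,b], then p₁'' > 0 on [a,b]. -/

import Mathlib

/-- Classification of pairs of support functions with p₁p₂ = p₁'p₂': case (3). -/
theorem classification_case_12 (a b : ℝ) (hab : a < b) (p₁ p₂ : ℝ → ℝ)
    (hp₁ : Differentiable ℝ p₁) (hp₁' : Differentiable ℝ (deriv p₁))
    (hp₂ : Differentiable ℝ p₂) (hp₂' : Differentiable ℝ (deriv p₂))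
    (hpos₁ : ∀ θ ∈ Set.Icc a b, 0 < p₁ θ)
    (hpos₂ : ∀ θ ∈ Set.Icc a b, 0 < p₂ θ)
    (hcond : ∀ θ ∈ Set.Icc a b, p₁ θ * p₂ θ = deriv p₁ θ * deriv p₂ θ)
    (h₁ : ∀ θ ∈ Set.Icc a b, deriv p₁ θ < 0)
    (h₂ : ∀ θ ∈ Set.Icc a b, deriv p₂ θ < 0)
    (h₃ : ∀ θ ∈ Set.Icc a b, deriv (deriv p₂) θ < 0) :
    ∀ θ ∈ Set.Icc a b, 0 < deriv (deriv p₁) θ := by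
  intro θ hθ
  set F : ℝ → ℝ := fun x => p₁ x * p₂ x - deriv p₁ x * deriv p₂ x with hF
  have hFdiff : Differentiable ℝ F := (hp₁.mul hp₂).sub (hp₁'.mul hp₂')
  have hFzero : ∀ x ∈ Set.Icc a b, F x = 0 := by
    intro x hx
    simp [hF, hcond x hx]
  have hUD := uniqueDiffOn_Icc hab
  have hderiv0 : deriv F θ = 0 := by
    rw [← (hFdiff θ).derivWithin (hUD θ hθ)]
    rw [derivWithin_congr hFzero (hFzero θ hθ)]
    simp
  have hFderiv : deriv F θ = deriv p₁ θ * p₂ θ + p₁ θ * deriv p₂ θ -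
      (deriv (deriv p₁) θ * deriv p₂ θ + deriv p₁ θ * deriv (deriv p₂) θ) := by
    rw [hF]
    rw [deriv_fun_sub ((hp₁ θ).fun_mul (hp₂ θ)) ((hp₁' θ).fun_mul (hp₂' θ)),
      deriv_fun_mul (hp₁ θ) (hp₂ θ), deriv_fun_mul (hp₁' θ) (hp₂' θ)]
  rw [hFderiv] at hderiv0
  nlinarith [hpos₁ θ hθ, hpos₂ θ hθ, h₁ θ hθ, h₂ θ hθ, h₃ θ hθ,
    mul_pos (hpos₁ θ hθ) (hpos₂ θ hθ)]
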